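/- Let X be a topological space in which every Λ-set is open, and suppose g ≤ f are real functions on X. Suppose ρ is a strong binary relation on the power set of X and for each rational t there are lower indefinite cut sets A(f,t), A(g,t) such that t₁ < t₂ implies A(f,t₁) ρ A(g,t₂). Then there exists a contra-continuous function h on X with g ≤ h ≤ f. -/
import Mathlib


open Set

variable {X : Type*} [TopologicalSpace X]

/-- The kernel `A^Λ`: intersection of all open sets containing `A`. -/
def kernelSet (A : Set X) : Set X := ⋂₀ {O | IsOpen O ∧ A ⊆ O}

/-- The V-hull `A^V`: union of all closed sets contained in `A`. -/
def vHull (A : Set X) : Set X := ⋃₀ {F | IsClosed F ∧ F ⊆ A}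

/-- An F_σ set: a countable union of closed sets. -/
def IsFsigma (A : Set X) : Prop :=
  ∃ S : Set (Set X), S.Countable ∧ (∀ F ∈ S, IsClosed F) ∧ A = ⋃₀ S

lemma subset_kernelSet' (A : Set X) : A ⊆ kernelSet A := fun x hx =>
  mem_sInter.2 fun _O hO => hO.2 hx

lemma kernelSet_mono' {A B : Set X} (h : A ⊆ B) : kernelSet A ⊆ kernelSet B :=
  fun x hx => mem_sInter.2 fun O hO => mem_sInter.1 hx O ⟨hO.1, h.trans hO.2⟩

lemma kernelSet_idem' (A : Set X) : kernelSet (kernelSet A) = kernelSet A := by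
  apply Subset.antisymm
  · intro x hx
    refine mem_sInter.2 fun O hO => mem_sInter.1 hx O ⟨hO.1, ?_⟩
    intro y hy
    exact mem_sInter.1 hy O hO
  · exact subset_kernelSet' _

lemma isOpen_kernelSet' (hΛ : ∀ A : Set X, A = kernelSet A → IsOpen A) (A : Set X) :
    IsOpen (kernelSet A) := hΛ _ (kernelSet_idem' A).symm

lemma vHull_subset' (A : Set X) : vHull A ⊆ A := by
  rintro x ⟨F, hF, hxF⟩
  exact hF.2 hxF

lemma compl_vHull' (A : Set X) : (vHull A)ᶜ = kernelSet Aᶜ := by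
  ext x
  constructor
  · intro hx
    refine mem_sInter.2 fun O hO => ?_
    by_contra hxO
    exact hx ⟨Oᶜ, ⟨hO.1.isClosed_compl, fun y hy => by
      by_contra hyA
      exact hy (hO.2 hyA)⟩, hxO⟩
  · rintro hx ⟨F, ⟨hFc, hFA⟩, hxF⟩
    have : x ∈ Fᶜ := mem_sInter.1 hx Fᶜ ⟨hFc.isOpen_compl, fun y hy => by
      intro hyF
      exact hy (hFA hyF)⟩
    exact this hxF

lemma isClosed_vHull' (hΛ : ∀ A : Set X, A = kernelSet A → IsOpen A) (A : Set X) :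
    IsClosed (vHull A) := by
  rw [← isOpen_compl_iff, compl_vHull']
  exact isOpen_kernelSet' hΛ _

theorem insertion_contraContinuous
    (hΛ : ∀ A : Set X, A = kernelSet A → IsOpen A)
    (f g : X → ℝ) (hgf : g ≤ f)
    (ρ : Set X → Set X → Prop)
    -- ρ is a strong binary relation:
    (hρ1 : ∀ (m n : ℕ) (A : Fin m → Set X) (B : Fin n → Set X),
      (∀ i j, ρ (A i) (B j)) →
        ∃ C : Set X, (∀ i, ρ (A i) C) ∧ (∀ j, ρ C (B j)))
    (hρ2 : ∀ A B : Set X, A ⊆ B →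
      ((∀ v, ρ B v → ρ A v) ∧ (∀ u, ρ u A → ρ u B)))
    (hρ3 : ∀ A B : Set X, ρ A B → kernelSet A ⊆ B ∧ A ⊆ vHull B)
    -- lower indefinite cut sets
    (Af Ag : ℚ → Set X)
    (hAf : ∀ t : ℚ, {x | f x < t} ⊆ Af t ∧ Af t ⊆ {x | f x ≤ t})
    (hAg : ∀ t : ℚ, {x | g x < t} ⊆ Ag t ∧ Ag t ⊆ {x | g x ≤ t})
    (hcut : ∀ t₁ t₂ : ℚ, t₁ < t₂ → ρ (Af t₁) (Ag t₂)) :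
    ∃ h : X → ℝ, (∀ U : Set ℝ, IsOpen U → IsClosed (h ⁻¹' U)) ∧ g ≤ h ∧ h ≤ f := by
  classical
  -- the specialization-type relation
  set Rel : X → X → Prop := fun a b => b ∈ kernelSet ({a} : Set X) with hRelDef
  -- interpolation from the strong binary relation
  have interp : ∀ {A B : Set X}, ρ A B → ∃ C, ρ A C ∧ ρ C B := by
    intro A B hAB
    obtain ⟨C, h1, h2⟩ := hρ1 1 1 (fun _ => A) (fun _ => B) (fun _ _ => hAB)
    exact ⟨C, h1 0, h2 0⟩
  have hAgmono : ∀ {u u' : ℚ}, u < u' → Ag u ⊆ Ag u' := by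
    intro u u' huu x hx
    refine (hAg u').1 ?_
    have h1 : g x ≤ (u : ℝ) := (hAg u).2 hx
    have h2 : (u : ℝ) < (u' : ℝ) := by exact_mod_cast huu
    exact lt_of_le_of_lt h1 h2
  have hρAg : ∀ {C : Set X} {u u' : ℚ}, u < u' → ρ C (Ag u) → ρ C (Ag u') := by
    intro C u u' h hC
    exact (hρ2 _ _ (hAgmono h)).2 _ hC
  -- one interpolation step absorbing kernel and closure
  have step : ∀ {C₀ : Set X} {u u' : ℚ}, u < u' → ρ C₀ (Ag u) →
      ∃ C, ρ C (Ag u') ∧ kernelSet C₀ ⊆ C ∧ closure C₀ ⊆ C ∧ C₀ ⊆ C := by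
    intro C₀ u u' h hC
    obtain ⟨C, h1, h2⟩ := interp (hρAg h hC)
    have h3 := hρ3 _ _ h1
    have hsub : C₀ ⊆ C := h3.2.trans (vHull_subset' C)
    have hcl : closure C₀ ⊆ C :=
      (closure_minimal h3.2 (isClosed_vHull' hΛ C)).trans (vHull_subset' C)
    exact ⟨C, h2, h3.1, hcl, hsub⟩
  -- the chain-absorption invariant
  set InC : X → X → Prop := fun x y => ∀ u u' : ℚ, u < u' → ∀ C₀ : Set X,
      ρ C₀ (Ag u) → x ∈ C₀ → ∃ C, ρ C (Ag u') ∧ C₀ ⊆ C ∧ y ∈ C with hInCDef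
  have key : ∀ x y, Relation.EqvGen Rel x y → InC x y ∧ InC y x := by
    intro x y hxy
    induction hxy with
    | rel a b hab =>
      constructor
      · intro u u' h C₀ hC ha
        obtain ⟨C, hC', hker, _, hsub⟩ := step h hC
        refine ⟨C, hC', hsub, ?_⟩
        have : kernelSet ({a} : Set X) ⊆ kernelSet C₀ :=
          kernelSet_mono' (singleton_subset_iff.2 ha)
        exact hker (this hab)
      · intro u u' h C₀ hC hb
        obtain ⟨C, hC', _, hcl, hsub⟩ := step h hC
        refine ⟨C, hC', hsub, ?_⟩
        -- a ∈ closure {b}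
        have hacl : a ∈ closure ({b} : Set X) := by
          rw [mem_closure_iff]
          intro O hO haO
          exact ⟨b, mem_sInter.1 hab O ⟨hO, singleton_subset_iff.2 haO⟩, rfl⟩
        have : closure ({b} : Set X) ⊆ closure C₀ :=
          closure_mono (singleton_subset_iff.2 hb)
        exact hcl (this hacl)
    | refl a =>
      constructor <;>
      · intro u u' h C₀ hC ha
        exact ⟨C₀, hρAg h hC, subset_rfl, ha⟩
    | symm a b _ ih => exact ⟨ih.2, ih.1⟩
    | trans a b c _ _ ih₁ ih₂ =>
      have compose : ∀ p q r : X, InC p q → InC q r → InC p r := by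
        intro p q r h1 h2 u u' huu C₀ hC hp
        have hu1 : u < (u + u') / 2 := by linarith
        have hu2 : (u + u') / 2 < u' := by linarith
        obtain ⟨C₁, hC₁, hsub₁, hq⟩ := h1 u ((u + u') / 2) hu1 C₀ hC hp
        obtain ⟨C₂, hC₂, hsub₂, hr⟩ := h2 ((u + u') / 2) u' hu2 C₁ hC₁ hq
        exact ⟨C₂, hC₂, hsub₁.trans hsub₂, hr⟩
      exact ⟨compose a b c ih₁.1 ih₂.1, compose c b a ih₂.2 ih₁.2⟩
  -- the main estimate : g y ≤ f x on equivalence classes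
  have gf : ∀ x y, Relation.EqvGen Rel x y → g y ≤ f x := by
    intro x y hxy
    by_contra hlt
    push_neg at hlt
    obtain ⟨u, hu1, hu2⟩ := exists_rat_btwn hlt
    obtain ⟨u₀, h01, h02⟩ := exists_rat_btwn hu1
    obtain ⟨t, ht1, ht2⟩ := exists_rat_btwn h01
    have htu : t < u₀ := by exact_mod_cast ht2
    have hu0u : u₀ < u := by exact_mod_cast h02
    obtain ⟨C₀, hc1, hc2⟩ := interp (hcut t u₀ htu)
    have hx : x ∈ C₀ := vHull_subset' C₀ ((hρ3 _ _ hc1).2 ((hAf t).1 ht1))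
    obtain ⟨C, hC, _, hyC⟩ := (key x y hxy).1 u₀ u hu0u C₀ hc2 hx
    have hgy : g y ≤ (u : ℝ) := (hAg u).2 (vHull_subset' _ ((hρ3 _ _ hC).2 hyC))
    exact absurd (lt_of_lt_of_le hu2 hgy) (lt_irrefl _)
  -- define h as the sup of g over the equivalence class
  refine ⟨fun x => sSup (g '' {y | Relation.EqvGen Rel x y}), ?_, ?_, ?_⟩
  · -- contra-continuity : the preimage of ANY set is closed
    intro U _
    have hconst : ∀ a b, Relation.EqvGen Rel a b →
        sSup (g '' {y | Relation.EqvGen Rel a y}) =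
        sSup (g '' {y | Relation.EqvGen Rel b y}) := by
      intro a b hab
      have : {y | Relation.EqvGen Rel a y} = {y | Relation.EqvGen Rel b y} := by
        ext z
        exact ⟨fun hz => Relation.EqvGen.trans _ _ _ (Relation.EqvGen.symm _ _ hab) hz,
          fun hz => Relation.EqvGen.trans _ _ _ hab hz⟩
      rw [this]
    rw [← isOpen_compl_iff]
    have hset : ((fun x => sSup (g '' {y | Relation.EqvGen Rel x y})) ⁻¹' U)ᶜ =
        ⋃ y ∈ ((fun x => sSup (g '' {y' | Relation.EqvGen Rel x y'})) ⁻¹' U)ᶜ,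
          kernelSet ({y} : Set X) := by
      ext z
      constructor
      · intro hz
        exact mem_iUnion₂.2 ⟨z, hz, subset_kernelSet' _ rfl⟩
      · intro hz
        obtain ⟨y, hy, hzy⟩ := mem_iUnion₂.1 hz
        have hrel : Relation.EqvGen Rel y z := Relation.EqvGen.rel _ _ hzy
        intro hzU
        apply hy
        have := hconst y z hrel
        simpa [mem_preimage, this] using hzU
    rw [hset]
    exact isOpen_biUnion fun y _ => isOpen_kernelSet' hΛ _
  · -- g ≤ h
    intro x
    have hbdd : BddAbove (g '' {y | Relation.EqvGen Rel x y}) := by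
      refine ⟨f x, ?_⟩
      rintro _ ⟨y, hy, rfl⟩
      exact gf x y hy
    exact le_csSup hbdd ⟨x, Relation.EqvGen.refl x, rfl⟩
  · -- h ≤ f
    intro x
    refine csSup_le ⟨g x, x, Relation.EqvGen.refl x, rfl⟩ ?_
    rintro _ ⟨y, hy, rfl⟩
    exact gf x y hy
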